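/- Fix γ > 0. For i = 1,2 let F_{i0} be distributions on [0,∞) and define F_{iγ} by (F_{iγ})̄(x) = e^{-γx}(F_{i0})̄(x) for x ≥ 0 (and 1 for x < 0). If for i = 1,2 and all t > 0, |(F_{i0})̄(x-t) - (F_{i0})̄(x)| = o((F_{10}*F_{20})̄(x)) as x → ∞, then for i = 1,2 and all t > 0, |(F_{iγ})̄(x-t) - e^{γt}(F_{iγ})̄(x)| = o((F_{1γ}*F_{2γ})̄(x)) as x → ∞. -/

import Mathlib

open MeasureTheory Filter Set Asymptotics

/-- The tail `F̄(x) = μ((x,∞))` of a distribution `μ` on `ℝ`. -/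
noncomputable def tail (μ : MeasureTheory.Measure ℝ) (x : ℝ) : ℝ := (μ (Set.Ioi x)).toReal

/-- Convolution of two distributions on `ℝ`. -/
noncomputable def mconv (μ ν : MeasureTheory.Measure ℝ) : MeasureTheory.Measure ℝ :=
  MeasureTheory.Measure.map (fun p : ℝ × ℝ => p.1 + p.2) (μ.prod ν)

/-- `iconv μ k` is the `k`-fold convolution `μ^{*k}` (with `μ^{*0} = δ₀`). -/
noncomputable def iconv (μ : MeasureTheory.Measure ℝ) : ℕ → MeasureTheory.Measure ℝ
  | 0 => MeasureTheory.Measure.dirac 0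
  | n + 1 => mconv (iconv μ n) μ

/-- The class `L(γ)`: `F̄(x-t) ~ e^{γt} F̄(x)` as `x → ∞`, for every `t`. -/
def MemL (γ : ℝ) (μ : MeasureTheory.Measure ℝ) : Prop :=
  ∀ t : ℝ, Filter.Tendsto (fun x => tail μ (x - t) / tail μ x) Filter.atTop
    (nhds (Real.exp (γ * t)))

/-- The class `OS`: `limsup_{x→∞} (F*F)̄(x) / F̄(x) < ∞`. -/
def MemOS (μ : MeasureTheory.Measure ℝ) : Prop :=
  Filter.IsBoundedUnder (· ≤ ·) Filter.atTop (fun x => tail (mconv μ μ) x / tail μ x)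


lemma tail_nonneg (μ : Measure ℝ) (x : ℝ) : 0 ≤ tail μ x := ENNReal.toReal_nonneg

lemma meas_Ioi (μ : Measure ℝ) [IsFiniteMeasure μ] (x : ℝ) :
    μ (Ioi x) = ENNReal.ofReal (tail μ x) := (ENNReal.ofReal_toReal (measure_ne_top μ _)).symm

lemma tail_antitone (μ : Measure ℝ) [IsFiniteMeasure μ] : Antitone (tail μ) := fun a b hab =>
  ENNReal.toReal_mono (measure_ne_top μ _) (measure_mono (Ioi_subset_Ioi hab))

lemma tail_le_one (μ : Measure ℝ) [IsProbabilityMeasure μ] (x : ℝ) : tail μ x ≤ 1 := by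
  have := prob_le_one (μ := μ) (s := Ioi x)
  simpa [tail] using ENNReal.toReal_mono ENNReal.one_ne_top this

lemma meas_Ioi_one {μ : Measure ℝ} [IsProbabilityMeasure μ] (h : μ (Iio 0) = 0) {x : ℝ}
    (hx : x < 0) : μ (Ioi x) = 1 := by
  have h1 : μ (Iic x) = 0 := measure_mono_null (Iic_subset_Iio.mpr hx) h
  have h2 := measure_compl (μ := μ) (s := Iic x) measurableSet_Iic (measure_ne_top _ _)
  rw [compl_Iic] at h2
  rw [h2, h1, measure_univ, tsub_zero]

lemma tail_one {μ : Measure ℝ} [IsProbabilityMeasure μ] (h : μ (Iio 0) = 0) {x : ℝ}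
    (hx : x < 0) : tail μ x = 1 := by
  rw [tail, meas_Ioi_one h hx, ENNReal.toReal_one]

lemma support_of_tail_one {μ : Measure ℝ} [IsProbabilityMeasure μ]
    (h : ∀ x : ℝ, x < 0 → tail μ x = 1) : μ (Iio 0) = 0 := by
  have key : ∀ x : ℝ, x < 0 → μ (Iic x) = 0 := by
    intro x hx
    have h1 : μ (Ioi x) = 1 := by
      have h2 := h x hx
      rw [tail] at h2
      rw [← ENNReal.ofReal_toReal (measure_ne_top μ (Ioi x)), h2]
      simp
    have h3 := measure_compl (μ := μ) (s := Ioi x) measurableSet_Ioi (measure_ne_top _ _)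
    rw [compl_Ioi] at h3
    rw [h3, h1, measure_univ, tsub_self]
  have hU : Iio (0:ℝ) = ⋃ n : ℕ, Iic (-(1/((n:ℝ)+1))) := by
    ext a
    simp only [mem_Iio, mem_iUnion, mem_Iic]
    constructor
    · intro ha
      obtain ⟨n, hn⟩ := exists_nat_gt (1 / (-a))
      refine ⟨n, ?_⟩
      have hna : 0 < -a := by linarith
      have h1n : 1 / ((n:ℝ)+1) < -a := by
        rw [div_lt_iff₀ (by positivity)]
        rw [div_lt_iff₀ hna] at hn
        nlinarith
      linarith
    · rintro ⟨n, hn⟩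
      have : (0:ℝ) < 1/((n:ℝ)+1) := by positivity
      linarith
  rw [hU]
  exact measure_iUnion_null fun n => key _ (neg_lt_zero.mpr (by positivity))

lemma mconv_Ioi (μ ν : Measure ℝ) [SFinite μ] [SFinite ν] (x : ℝ) :
    (mconv μ ν) (Ioi x) = ∫⁻ a, ν (Ioi (x - a)) ∂μ := by
  rw [mconv, Measure.map_apply (f := fun p : ℝ × ℝ => p.1 + p.2) (by fun_prop) measurableSet_Ioi]
  have hset : (fun p : ℝ × ℝ => p.1 + p.2) ⁻¹' Ioi x = {p : ℝ × ℝ | x - p.1 < p.2} := by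
    ext p
    simp [sub_lt_iff_lt_add']
  rw [hset, Measure.prod_apply]
  · rfl
  · exact measurableSet_lt (measurable_const.sub measurable_fst) measurable_snd

lemma mconv_prob (μ ν : Measure ℝ) [IsProbabilityMeasure μ] [IsProbabilityMeasure ν] :
    IsProbabilityMeasure (mconv μ ν) := by
  rw [mconv]
  exact Measure.isProbabilityMeasure_map ((measurable_fst.add measurable_snd).aemeasurable)

lemma tail_fun_measurable (ν : Measure ℝ) (x : ℝ) :
    Measurable (fun a : ℝ => ν (Ioi (x - a))) := by
  have : Monotone (fun a : ℝ => ν (Ioi (x - a))) := by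
    intro a b hab
    exact measure_mono (Ioi_subset_Ioi (by linarith))
  exact this.measurable

noncomputable def nud (γ : ℝ) (μ : Measure ℝ) : Measure ℝ :=
  μ.withDensity fun a => ENNReal.ofReal (Real.exp (-(γ * a)))

lemma ae_nonneg_of_support {μ : Measure ℝ} (hs : μ (Iio 0) = 0) : ∀ᵐ a ∂μ, (0:ℝ) ≤ a := by
  rw [ae_iff]
  convert hs using 2
  ext a
  simp [not_le]

lemma meas_Ioc (μ : Measure ℝ) [IsFiniteMeasure μ] {c x : ℝ} (hcx : c ≤ x) :
    μ (Ioc c x) = ENNReal.ofReal (tail μ c - tail μ x) := by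
  rw [← Ioi_diff_Ioi, measure_diff (Ioi_subset_Ioi hcx) measurableSet_Ioi.nullMeasurableSet
    (measure_ne_top _ _), meas_Ioi, meas_Ioi,
    ← ENNReal.ofReal_sub _ (tail_nonneg _ _)]

section Core

variable {γ : ℝ} (hγ : 0 < γ) {μ0 μγ : Measure ℝ} [IsProbabilityMeasure μ0]
  [IsProbabilityMeasure μγ]
  (hs : μ0 (Iio 0) = 0)
  (ht : ∀ x : ℝ, 0 ≤ x → tail μγ x = Real.exp (-(γ * x)) * tail μ0 x)
  (ht' : ∀ x : ℝ, x < 0 → tail μγ x = 1)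

include hγ hs ht ht'

lemma tail_gamma_eq (c : ℝ) :
    tail μγ c = Real.exp (-(γ * max c 0)) * tail μ0 c := by
  rcases le_or_gt 0 c with hc | hc
  · rw [max_eq_left hc]; exact ht c hc
  · rw [max_eq_right hc.le, ht' c hc, tail_one hs hc]
    simp

lemma core_Ioc (c x : ℝ) (hx : 0 ≤ x) : nud γ μ0 (Ioc c x) ≤ μγ (Ioc c x) := by
  rcases lt_or_ge c x with hcx | hcx
  swap
  · rw [Ioc_eq_empty (not_lt.mpr hcx)]; simp
  set c' := max c 0 with hc'
  have hc'x : c' ≤ x := max_le hcx.le hx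
  have h1 : nud γ μ0 (Ioc c x) ≤ ENNReal.ofReal (Real.exp (-(γ * c'))) * μ0 (Ioc c x) := by
    rw [nud, withDensity_apply _ measurableSet_Ioc]
    calc ∫⁻ a in Ioc c x, ENNReal.ofReal (Real.exp (-(γ * a))) ∂μ0
        ≤ ∫⁻ _ in Ioc c x, ENNReal.ofReal (Real.exp (-(γ * c'))) ∂μ0 := by
          refine setLIntegral_mono_ae aemeasurable_const ?_
          filter_upwards [ae_nonneg_of_support hs] with a ha hmem
          refine ENNReal.ofReal_le_ofReal (Real.exp_le_exp.mpr ?_)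
          have hca : c' ≤ a := max_le hmem.1.le ha
          nlinarith
      _ = ENNReal.ofReal (Real.exp (-(γ * c'))) * μ0 (Ioc c x) := setLIntegral_const _ _
  refine h1.trans ?_
  rw [meas_Ioc μ0 hcx.le, meas_Ioc μγ hcx.le, ← ENNReal.ofReal_mul (Real.exp_nonneg _)]
  apply ENNReal.ofReal_le_ofReal
  rw [tail_gamma_eq hγ hs ht ht' c, ← hc', ht x hx]
  have hexp : Real.exp (-(γ * x)) ≤ Real.exp (-(γ * c')) :=
    Real.exp_le_exp.mpr (by nlinarith)
  have := tail_nonneg μ0 x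
  nlinarith

lemma core_Icc (b x : ℝ) (hbx : b ≤ x) (hx : 0 ≤ x) :
    nud γ μ0 (Icc b x) ≤ μγ (Icc b x) := by
  have hInt : Icc b x = ⋂ n : ℕ, Ioc (b - 1/((n:ℝ)+1)) x := by
    ext a
    simp only [mem_Icc, mem_iInter, mem_Ioc]
    constructor
    · rintro ⟨h1, h2⟩ n
      have : (0:ℝ) < 1/((n:ℝ)+1) := by positivity
      exact ⟨by linarith, h2⟩
    · rintro hall
      refine ⟨?_, (hall 0).2⟩
      by_contra hab
      push_neg at hab
      obtain ⟨n, hn⟩ := exists_nat_gt (1 / (b - a))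
      have hba : 0 < b - a := by linarith
      have h1n : 1 / ((n:ℝ)+1) < b - a := by
        rw [div_lt_iff₀ (by positivity)]
        rw [div_lt_iff₀ hba] at hn
        nlinarith
      have := (hall n).1
      linarith
  have hanti : Antitone fun n : ℕ => Ioc (b - 1/((n:ℝ)+1)) x := by
    intro m n hmn
    apply Ioc_subset_Ioc_left
    have hm : ((m:ℝ)+1) ≤ ((n:ℝ)+1) := by exact_mod_cast by omega
    have h1 : 1/((n:ℝ)+1) ≤ 1/((m:ℝ)+1) := by
      apply one_div_le_one_div_of_le (by positivity) hm
    linarith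
  rw [hInt, hanti.measure_iInter (μ := μγ) (fun n => measurableSet_Ioc.nullMeasurableSet)
    ⟨0, measure_ne_top _ _⟩]
  refine le_iInf fun n => ?_
  calc nud γ μ0 (⋂ n : ℕ, Ioc (b - 1/((n:ℝ)+1)) x)
      ≤ nud γ μ0 (Ioc (b - 1/((n:ℝ)+1)) x) := measure_mono (iInter_subset _ n)
    _ ≤ μγ (Ioc (b - 1/((n:ℝ)+1)) x) := core_Ioc hγ hs ht ht' _ x hx

lemma core_Iic (x : ℝ) (hx : 0 ≤ x) : nud γ μ0 (Iic x) ≤ μγ (Iic x) := by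
  have h1 : nud γ μ0 (Iic x) ≤ μ0 (Iic x) := by
    rw [nud, withDensity_apply _ measurableSet_Iic]
    calc ∫⁻ a in Iic x, ENNReal.ofReal (Real.exp (-(γ * a))) ∂μ0
        ≤ ∫⁻ _ in Iic x, 1 ∂μ0 := by
          refine setLIntegral_mono_ae aemeasurable_const ?_
          filter_upwards [ae_nonneg_of_support hs] with a ha _
          calc ENNReal.ofReal (Real.exp (-(γ * a))) ≤ ENNReal.ofReal (Real.exp 0) := by
                refine ENNReal.ofReal_le_ofReal (Real.exp_le_exp.mpr (by nlinarith))
            _ = 1 := by simp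
      _ = μ0 (Iic x) := by rw [setLIntegral_const, one_mul]
  refine h1.trans ?_
  have h2 : ∀ (ν : Measure ℝ) [IsProbabilityMeasure ν],
      ν (Iic x) = 1 - ENNReal.ofReal (tail ν x) := by
    intro ν _
    have := measure_compl (μ := ν) (s := Ioi x) measurableSet_Ioi (measure_ne_top _ _)
    rw [compl_Ioi] at this
    rw [this, measure_univ, meas_Ioi]
  rw [h2 μ0, h2 μγ]
  apply tsub_le_tsub_left
  apply ENNReal.ofReal_le_ofReal
  rw [ht x hx]
  have := tail_nonneg μ0 x
  have := Real.exp_le_one_iff.mpr (neg_nonpos.mpr (by positivity) : -(γ*x) ≤ 0)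
  nlinarith

lemma levelset_ineq (h : ℝ → ℝ) (hmono : Monotone h) (t x : ℝ) (hx : 0 ≤ x) :
    nud γ μ0 ({a | t < h a} ∩ Iic x) ≤ μγ ({a | t < h a} ∩ Iic x) := by
  set S := {a : ℝ | t < h a} with hSdef
  have hup : ∀ ⦃a a' : ℝ⦄, a ∈ S → a ≤ a' → a' ∈ S := fun a a' ha haa' =>
    lt_of_lt_of_le ha (hmono haa')
  by_cases hne : S.Nonempty
  · by_cases hbd : BddBelow S
    · set b := sInf S with hb
      have hSup : S ⊆ Ici b := fun a ha => csInf_le hbd ha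
      by_cases hmem : b ∈ S
      · have hSeq : S = Ici b := Subset.antisymm hSup fun a ha => hup hmem ha
        rw [hSeq, Ici_inter_Iic]
        rcases le_or_gt b x with hbx | hbx
        · exact core_Icc hγ hs ht ht' b x hbx hx
        · rw [Icc_eq_empty (not_le.mpr hbx)]; simp
      · have hSeq : S = Ioi b := by
          apply Subset.antisymm
          · intro a ha
            exact lt_of_le_of_ne (show b ≤ a from hSup ha) fun e => hmem (e ▸ ha)
          · intro a ha
            obtain ⟨s, hsS, hsa⟩ := (csInf_lt_iff hbd hne).mp ha
            exact hup hsS hsa.le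
        rw [hSeq, Ioi_inter_Iic]
        exact core_Ioc hγ hs ht ht' b x hx
    · have hSeq : S = univ := by
        ext a
        simp only [mem_univ, iff_true]
        have hex : ∃ s ∈ S, s ≤ a := by
          by_contra hcon
          push_neg at hcon
          exact hbd ⟨a, fun s hsS => (hcon s hsS).le⟩
        obtain ⟨s, hsS, hsa⟩ := hex
        exact hup hsS hsa
      rw [hSeq, univ_inter]
      exact core_Iic hγ hs ht ht' x hx
  · rw [not_nonempty_iff_eq_empty.mp hne]
    simp

end Core

section Key

variable {γ : ℝ} (hγ : 0 < γ) (F10 F20 F1γ F2γ : Measure ℝ)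
    [IsProbabilityMeasure F10] [IsProbabilityMeasure F20]
    [IsProbabilityMeasure F1γ] [IsProbabilityMeasure F2γ]
    (hs1 : F10 (Set.Iio 0) = 0) (hs2 : F20 (Set.Iio 0) = 0)
    (ht1 : ∀ x : ℝ, 0 ≤ x → tail F1γ x = Real.exp (-(γ * x)) * tail F10 x)
    (ht1' : ∀ x : ℝ, x < 0 → tail F1γ x = 1)
    (ht2 : ∀ x : ℝ, 0 ≤ x → tail F2γ x = Real.exp (-(γ * x)) * tail F20 x)
    (ht2' : ∀ x : ℝ, x < 0 → tail F2γ x = 1)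

include hγ hs1 hs2 ht1 ht1' ht2 ht2'

lemma keyE (x : ℝ) (hx : 0 ≤ x) :
    ENNReal.ofReal (Real.exp (-(γ * x))) * (mconv F10 F20) (Ioi x)
      ≤ (mconv F1γ F2γ) (Ioi x) := by
  have hs2γ : F2γ (Iio 0) = 0 := support_of_tail_one ht2'
  rw [mconv_Ioi F10 F20 x, mconv_Ioi F1γ F2γ x,
    ← lintegral_const_mul' (ENNReal.ofReal (Real.exp (-(γ * x))))
      (fun a => F20 (Ioi (x - a))) ENNReal.ofReal_ne_top,
    ← lintegral_add_compl (fun a => ENNReal.ofReal (Real.exp (-(γ * x))) * F20 (Ioi (x - a)))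
      (measurableSet_Iic (a := x)) (μ := F10),
    ← lintegral_add_compl (fun a => F2γ (Ioi (x - a))) (measurableSet_Iic (a := x)) (μ := F1γ),
    compl_Iic]
  have hmono2 : Monotone (fun a : ℝ => tail F2γ (x - a)) := fun a b hab =>
    tail_antitone F2γ (by linarith : x - b ≤ x - a)
  refine add_le_add ?_ ?_
  · -- the Iic x part
    have hL : ∫⁻ a in Iic x, ENNReal.ofReal (Real.exp (-(γ * x))) * F20 (Ioi (x - a)) ∂F10
        = ∫⁻ a in Iic x, ENNReal.ofReal (tail F2γ (x - a)) ∂(nud γ F10) := by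
      rw [nud, restrict_withDensity measurableSet_Iic,
        lintegral_withDensity_eq_lintegral_mul _
          (by exact (Real.measurable_exp.comp (measurable_id.const_mul γ).neg).ennreal_ofReal)
          (by exact (hmono2.measurable).ennreal_ofReal)]
      refine setLIntegral_congr_fun_ae measurableSet_Iic ?_
      filter_upwards [ae_nonneg_of_support hs1] with a ha hmem
      have hxa : (0:ℝ) ≤ x - a := by simpa using hmem
      rw [meas_Ioi, ← ENNReal.ofReal_mul (Real.exp_nonneg _), Pi.mul_apply,
        ← ENNReal.ofReal_mul (Real.exp_nonneg _)]
      congr 1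
      rw [ht2 (x - a) hxa, show -(γ * x) = -(γ * a) + -(γ * (x - a)) by ring, Real.exp_add]
      ring
    have hR : ∫⁻ a in Iic x, F2γ (Ioi (x - a)) ∂F1γ
        = ∫⁻ a in Iic x, ENNReal.ofReal (tail F2γ (x - a)) ∂F1γ := by
      refine setLIntegral_congr_fun_ae measurableSet_Iic ?_
      filter_upwards with a _
      rw [meas_Ioi]
    rw [hL, hR]
    have hlc : ∀ (μ : Measure ℝ), ∫⁻ a in Iic x, ENNReal.ofReal (tail F2γ (x - a)) ∂μ
        = ∫⁻ t in Ioi (0:ℝ), μ ({a | t < tail F2γ (x - a)} ∩ Iic x) := by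
      intro μ
      rw [lintegral_eq_lintegral_meas_lt (μ.restrict (Iic x))
        (Eventually.of_forall fun a => tail_nonneg _ _) hmono2.measurable.aemeasurable]
      refine lintegral_congr fun t => ?_
      exact Measure.restrict_apply (hmono2.measurable measurableSet_Ioi)
    rw [hlc (nud γ F10), hlc F1γ]
    refine lintegral_mono fun t => ?_
    exact levelset_ineq hγ hs1 ht1 ht1' _ hmono2 t x hx
  · -- the Ioi x part
    have hL : ∫⁻ a in Ioi x, ENNReal.ofReal (Real.exp (-(γ * x))) * F20 (Ioi (x - a)) ∂F10
        = ENNReal.ofReal (Real.exp (-(γ * x))) * F10 (Ioi x) := by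
      rw [setLIntegral_congr_fun_ae measurableSet_Ioi (g := fun _ => ENNReal.ofReal
        (Real.exp (-(γ * x)))) ?_, setLIntegral_const]
      filter_upwards with a ha
      rw [meas_Ioi_one hs2 (by simp only [mem_Ioi] at ha; linarith), mul_one]
    have hR : ∫⁻ a in Ioi x, F2γ (Ioi (x - a)) ∂F1γ = F1γ (Ioi x) := by
      rw [setLIntegral_congr_fun_ae measurableSet_Ioi (g := fun _ => 1) ?_, setLIntegral_const,
        one_mul]
      filter_upwards with a ha
      exact meas_Ioi_one hs2γ (by simp only [mem_Ioi] at ha; linarith)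
    rw [hL, hR, meas_Ioi F10, meas_Ioi F1γ, ← ENNReal.ofReal_mul (Real.exp_nonneg _),
      ht1 x hx]

lemma keyR (x : ℝ) (hx : 0 ≤ x) :
    Real.exp (-(γ * x)) * tail (mconv F10 F20) x ≤ tail (mconv F1γ F2γ) x := by
  haveI := mconv_prob F10 F20
  haveI := mconv_prob F1γ F2γ
  have hE := keyE hγ F10 F20 F1γ F2γ hs1 hs2 ht1 ht1' ht2 ht2' x hx
  have := ENNReal.toReal_mono (measure_ne_top _ _) hE
  rwa [ENNReal.toReal_mul, ENNReal.toReal_ofReal (Real.exp_nonneg _)] at this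

end Key

lemma asympAux {γ : ℝ} (hγ : 0 < γ) (T0 Tγ C0 Cγ : ℝ → ℝ)
    (hC0nn : ∀ x, 0 ≤ C0 x) (hCγnn : ∀ x, 0 ≤ Cγ x)
    (ht : ∀ x, 0 ≤ x → Tγ x = Real.exp (-(γ * x)) * T0 x)
    (hkey : ∀ x, 0 ≤ x → Real.exp (-(γ * x)) * C0 x ≤ Cγ x)
    (t : ℝ)
    (ho : (fun x => |T0 (x - t) - T0 x|) =o[atTop] C0) :
    (fun x => |Tγ (x - t) - Real.exp (γ * t) * Tγ x|) =o[atTop] Cγ := by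
  have h1 : (fun x => (Real.exp (γ * t) * Real.exp (-(γ * x))) * |T0 (x - t) - T0 x|)
      =o[atTop] (fun x => (Real.exp (γ * t) * Real.exp (-(γ * x))) * C0 x) :=
    (isBigO_refl (fun x => Real.exp (γ * t) * Real.exp (-(γ * x))) atTop).mul_isLittleO ho
  have h2 : (fun x => (Real.exp (γ * t) * Real.exp (-(γ * x))) * C0 x) =O[atTop] Cγ := by
    apply IsBigO.of_bound (Real.exp (γ * t))
    filter_upwards [eventually_ge_atTop (max 0 (|t| + 1))] with x hx
    have hx0 : (0:ℝ) ≤ x := le_trans (le_max_left _ _) hx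
    rw [Real.norm_eq_abs, Real.norm_eq_abs, abs_of_nonneg (hCγnn x)]
    calc |(Real.exp (γ * t) * Real.exp (-(γ * x))) * C0 x|
        = Real.exp (γ * t) * |Real.exp (-(γ * x)) * C0 x| := by
          rw [mul_assoc, abs_mul, abs_of_nonneg (Real.exp_nonneg _)]
      _ ≤ Real.exp (γ * t) * Cγ x := by
          apply mul_le_mul_of_nonneg_left _ (Real.exp_nonneg _)
          rw [abs_of_nonneg (by have := hC0nn x; positivity)]
          exact hkey x hx0
  refine (h1.trans_isBigO h2).congr' ?_ (EventuallyEq.refl _ _)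
  filter_upwards [eventually_ge_atTop (max t 0)] with x hx
  have hxt : 0 ≤ x - t := by
    have := le_trans (le_max_left t 0) hx; linarith
  have hx0 : (0:ℝ) ≤ x := le_trans (le_max_right t 0) hx
  rw [ht _ hxt, ht _ hx0,
    show Real.exp (-(γ * (x - t))) = Real.exp (γ * t) * Real.exp (-(γ * x)) by
      rw [← Real.exp_add]; ring_nf,
    show Real.exp (γ * t) * Real.exp (-(γ * x)) * T0 (x - t)
        - Real.exp (γ * t) * (Real.exp (-(γ * x)) * T0 x)
        = (Real.exp (γ * t) * Real.exp (-(γ * x))) * (T0 (x - t) - T0 x) by ring,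
    abs_mul, abs_of_nonneg (by positivity : (0:ℝ) ≤ Real.exp (γ * t) * Real.exp (-(γ * x)))]

theorem stmt13 (γ : ℝ) (hγ : 0 < γ) (F10 F20 F1γ F2γ : Measure ℝ)
    [IsProbabilityMeasure F10] [IsProbabilityMeasure F20]
    [IsProbabilityMeasure F1γ] [IsProbabilityMeasure F2γ]
    (hs1 : F10 (Set.Iio 0) = 0) (hs2 : F20 (Set.Iio 0) = 0)
    (ht1 : ∀ x : ℝ, 0 ≤ x → tail F1γ x = Real.exp (-(γ * x)) * tail F10 x)
    (ht1' : ∀ x : ℝ, x < 0 → tail F1γ x = 1)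
    (ht2 : ∀ x : ℝ, 0 ≤ x → tail F2γ x = Real.exp (-(γ * x)) * tail F20 x)
    (ht2' : ∀ x : ℝ, x < 0 → tail F2γ x = 1)
    (ho : ∀ t > (0 : ℝ),
      ((fun x => |tail F10 (x - t) - tail F10 x|) =o[Filter.atTop]
        fun x => tail (mconv F10 F20) x) ∧
      ((fun x => |tail F20 (x - t) - tail F20 x|) =o[Filter.atTop]
        fun x => tail (mconv F10 F20) x)) :
    ∀ t > (0 : ℝ),
      ((fun x => |tail F1γ (x - t) - Real.exp (γ * t) * tail F1γ x|) =o[Filter.atTop]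
        fun x => tail (mconv F1γ F2γ) x) ∧
      ((fun x => |tail F2γ (x - t) - Real.exp (γ * t) * tail F2γ x|) =o[Filter.atTop]
        fun x => tail (mconv F1γ F2γ) x) := by
  intro t htpos
  have hkey : ∀ x, 0 ≤ x →
      Real.exp (-(γ * x)) * tail (mconv F10 F20) x ≤ tail (mconv F1γ F2γ) x :=
    keyR hγ F10 F20 F1γ F2γ hs1 hs2 ht1 ht1' ht2 ht2'
  exact ⟨asympAux hγ (tail F10) (tail F1γ) _ _ (fun x => tail_nonneg _ _)
      (fun x => tail_nonneg _ _) ht1 hkey t (ho t htpos).1,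
    asympAux hγ (tail F20) (tail F2γ) _ _ (fun x => tail_nonneg _ _)
      (fun x => tail_nonneg _ _) ht2 hkey t (ho t htpos).2⟩
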